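/- Let A be a symmetric hollow integer matrix of order at least 3 such that every principal submatrix of A of order 3 has smallest eigenvalue strictly greater than -√5. Then there exist a signed graph F and a function a : V(F) → ℕ⁺ such that A is switching equivalent to the blow-up matrix A_{F,a}. -/

import Mathlib

open Matrix

/-- The blow-up matrix `A_{F,a}` of a signed adjacency matrix `AF`. -/
def blowup {V : Type*} [DecidableEq V] (AF : Matrix V V ℤ) (a : V → ℕ) :
    Matrix (Σ v : V, Fin (a v)) (Σ v : V, Fin (a v)) ℤ :=
  fun p q => if p = q then 0 else if p.1 = q.1 then 2 else AF p.1 q.1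

namespace Stmt11Aux

lemma sqrt5_gt : 2 < Real.sqrt 5 := by
  nlinarith [Real.sq_sqrt (by norm_num : (5:ℝ) ≥ 0), Real.sqrt_nonneg 5]

/-- The key real quantity attached to a triple of entries. -/
noncomputable def Ee (x y z : ℤ) : ℝ :=
  Real.sqrt 5 * (5 - ((x:ℝ)^2+(y:ℝ)^2+(z:ℝ)^2)) + 2*((x:ℝ)*(y:ℝ)*(z:ℝ))

lemma Ee_perm (x y z : ℤ) : Ee x z y = Ee x y z := by unfold Ee; push_cast; ring

lemma detShiftPos {M : Matrix (Fin 3) (Fin 3) ℝ} (hM : M.IsHermitian)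
    (h : ∀ μ ∈ spectrum ℝ M, -Real.sqrt 5 < μ) {x : ℝ} (hx : Real.sqrt 5 ≤ x) :
    0 < (M + x • 1).det := by
  have hK : (M + x • 1).IsHermitian := by
    unfold Matrix.IsHermitian at hM ⊢
    rw [conjTranspose_add, hM, conjTranspose_smul]
    simp
  rw [hK.det_eq_prod_eigenvalues]
  apply Finset.prod_pos
  intro i _
  have hmem := hK.eigenvalues_mem_spectrum_real i
  set μ := hK.eigenvalues i
  have hshift : μ - x ∈ spectrum ℝ M := by
    rw [spectrum.mem_iff] at hmem ⊢
    convert hmem using 2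
    rw [Algebra.algebraMap_eq_smul_one, Algebra.algebraMap_eq_smul_one, sub_smul]
    abel
  have := h _ hshift
  exact_mod_cast (by linarith : (0:ℝ) < μ)

lemma boundOne (a b c : ℤ)
    (H : ∀ x : ℝ, Real.sqrt 5 ≤ x →
      0 < x^3 - ((a:ℝ)^2+(b:ℝ)^2+(c:ℝ)^2) * x + 2*((a:ℝ)*(b:ℝ)*(c:ℝ))) :
    a^2 ≤ 4 := by
  by_contra hcon
  push_neg at hcon
  have h5 : (5:ℤ) ≤ a^2 := hcon
  have habs : Real.sqrt 5 ≤ ((|a| : ℤ) : ℝ) := by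
    have h1 : Real.sqrt 5 ≤ Real.sqrt ((a:ℝ)^2) := by
      apply Real.sqrt_le_sqrt; exact_mod_cast h5
    rw [Real.sqrt_sq_eq_abs] at h1
    exact h1.trans_eq (by push_cast; rfl)
  have hr := H _ habs
  have hz : 0 < |a|^3 - (a^2+b^2+c^2) * |a| + 2*(a*b*c) := by exact_mod_cast hr
  nlinarith [abs_nonneg a, sq_abs a, le_abs_self (a*b*c), abs_mul (a*b) c,
    abs_mul a b, sq_nonneg (|b| - |c|), abs_nonneg b, abs_nonneg c,
    sq_abs b, sq_abs c, mul_nonneg (abs_nonneg a) (sq_nonneg (|b| - |c|))]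

lemma EeOf (a b c : ℤ)
    (H : ∀ x : ℝ, Real.sqrt 5 ≤ x →
      0 < x^3 - ((a:ℝ)^2+(b:ℝ)^2+(c:ℝ)^2) * x + 2*((a:ℝ)*(b:ℝ)*(c:ℝ))) :
    0 < Ee a b c := by
  have h0 := H _ (le_refl (Real.sqrt 5))
  have h5 : Real.sqrt 5 ^ 2 = 5 := Real.sq_sqrt (by norm_num)
  have h3 : Real.sqrt 5 ^ 3 = 5 * Real.sqrt 5 := by
    rw [pow_succ, h5]
  unfold Ee
  nlinarith [h0]

set_option maxHeartbeats 1000000 in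
lemma classify (x y z : ℤ) (hx : x^2 ≤ 4) (hy : y^2 ≤ 4) (hz : z^2 ≤ 4)
    (hE : 0 < Ee x y z) :
    (x^2 = 4 → y^2 = 4 → z^2 = 4 ∧ x*y*z = 8) ∧
    (x = 2 → z^2 ≠ 4 → y = z) := by
  unfold Ee at hE
  have hx1 : -2 ≤ x := by nlinarith
  have hx2 : x ≤ 2 := by nlinarith
  have hy1 : -2 ≤ y := by nlinarith
  have hy2 : y ≤ 2 := by nlinarith
  have hz1 : -2 ≤ z := by nlinarith
  have hz2 : z ≤ 2 := by nlinarith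
  have g2 := sqrt5_gt
  have g0 := Real.sqrt_nonneg 5
  clear hx hy hz
  interval_cases x <;> interval_cases y <;> interval_cases z <;>
    refine ⟨fun h1 h2 => ?_, fun h1 h2 => ?_⟩ <;>
    first
      | (norm_num at h1 h2 ⊢; done)
      | (norm_num at h2; done)
      | (exfalso; push_cast at hE; nlinarith)

lemma sq4 {a : ℤ} (h : a^2 = 4) : a = 2 ∨ a = -2 := by
  have h1 : (a - 2) * (a + 2) = 0 := by ring_nf; linarith
  rcases mul_eq_zero.1 h1 with h2 | h2
  · left; linarith
  · right; linarith

lemma exists_third {n : ℕ} (hn : 3 ≤ n) (i j : Fin n) : ∃ k : Fin n, k ≠ i ∧ k ≠ j := by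
  by_contra hc
  push_neg at hc
  have hsub : (Finset.univ : Finset (Fin n)) ⊆ {i, j} := by
    intro k _
    simp only [Finset.mem_insert, Finset.mem_singleton]
    rcases eq_or_ne k i with rfl | hne
    · left; rfl
    · right; exact hc k hne
  have h1 := Finset.card_le_card hsub
  have h2 : ({i, j} : Finset (Fin n)).card ≤ 2 :=
    (Finset.card_insert_le _ _).trans (by simp)
  simp only [Finset.card_univ, Fintype.card_fin] at h1
  omega

section Matrices

variable {n : ℕ} (A : Matrix (Fin n) (Fin n) ℤ)

lemma keyA (hAs : A.IsSymm) (hAh : ∀ i, A i i = 0)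
    (h3 : ∀ f : Fin 3 → Fin n, Function.Injective f →
      ∀ μ ∈ spectrum ℝ ((A.submatrix f f).map (fun x : ℤ => (x : ℝ))),
        -Real.sqrt 5 < μ)
    {i j k : Fin n} (hij : i ≠ j) (hjk : j ≠ k) (hik : i ≠ k) :
    ∀ x : ℝ, Real.sqrt 5 ≤ x →
      0 < x^3 - (((A i j :ℝ))^2+((A j k:ℝ))^2+((A i k:ℝ))^2) * x
          + 2*((A i j:ℝ)*(A j k:ℝ)*(A i k:ℝ)) := by
  intro x hx
  have hinj : Function.Injective ![i, j, k] := by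
    intro u v huv
    fin_cases u <;> fin_cases v <;>
      simp only [Matrix.cons_val_zero, Matrix.cons_val_one, Matrix.cons_val_two,
        Matrix.head_cons, Matrix.vecHead, Matrix.vecTail, Function.comp_apply,
        Fin.mk_zero, Fin.mk_one] at huv ⊢ <;>
      first | rfl | exact absurd huv (by assumption) | exact absurd huv.symm (by assumption)
  set M : Matrix (Fin 3) (Fin 3) ℝ :=
    (A.submatrix ![i, j, k] ![i, j, k]).map (fun x : ℤ => (x : ℝ)) with hM
  have hHerm : M.IsHermitian := by
    rw [Matrix.IsHermitian]
    ext u v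
    simp only [hM, Matrix.conjTranspose_apply, Matrix.map_apply, Matrix.submatrix_apply,
      star_trivial]
    exact congrArg _ (hAs.apply _ _)
  have hdet := detShiftPos hHerm (h3 ![i,j,k] hinj) hx
  rw [Matrix.det_fin_three] at hdet
  simp only [hM, Matrix.add_apply, Matrix.smul_apply, Matrix.one_apply, Matrix.map_apply,
    Matrix.submatrix_apply, Matrix.cons_val_zero, Matrix.cons_val_one, Matrix.head_cons,
    Matrix.cons_val_two, Matrix.vecTail, Matrix.vecHead, Function.comp] at hdet
  norm_num at hdet
  rw [hAh i, hAh j, hAh k, hAs.apply i j, hAs.apply j k, hAs.apply i k] at hdet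
  push_cast at hdet
  nlinarith [hdet]

/-- The switching-class relation. -/
def rel (i j : Fin n) : Prop := i = j ∨ (A i j)^2 = 4

def relSetoid (h : Equivalence (rel A)) : Setoid (Fin n) := ⟨rel A, h⟩

variable (h : Equivalence (rel A))

noncomputable instance : Fintype (Quotient (relSetoid A h)) := Fintype.ofFinite _

noncomputable def nm : ℕ := Fintype.card (Quotient (relSetoid A h))

noncomputable def eQ : Quotient (relSetoid A h) ≃ Fin (nm A h) := Fintype.equivFin _

noncomputable def cls (i : Fin n) : Fin (nm A h) := eQ A h (Quotient.mk (relSetoid A h) i)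

lemma cls_eq_iff {i j : Fin n} : cls A h i = cls A h j ↔ rel A i j := by
  unfold cls
  rw [Equiv.apply_eq_iff_eq, Quotient.eq]
  rfl

noncomputable instance (v : Fin (nm A h)) : Fintype {i : Fin n // cls A h i = v} :=
  Fintype.ofFinite _

noncomputable def aF (v : Fin (nm A h)) : ℕ := Fintype.card {i : Fin n // cls A h i = v}

lemma aF_pos (v : Fin (nm A h)) : 0 < aF A h v := by
  rw [aF, Fintype.card_pos_iff]
  obtain ⟨q, hq⟩ := (eQ A h).surjective v
  obtain ⟨i, rfl⟩ := Quotient.exists_rep q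
  exact ⟨⟨i, hq⟩⟩

noncomputable def eqv : Fin n ≃ Σ v : Fin (nm A h), Fin (aF A h v) :=
  (Equiv.sigmaFiberEquiv (cls A h)).symm.trans
    (Equiv.sigmaCongrRight fun v => Fintype.equivFin _)

lemma eqv_fst (i : Fin n) : (eqv A h i).1 = cls A h i := rfl

noncomputable def rep (v : Fin (nm A h)) : Fin n := (eqv A h).symm ⟨v, ⟨0, aF_pos A h v⟩⟩

lemma cls_rep (v : Fin (nm A h)) : cls A h (rep A h v) = v := by
  rw [← eqv_fst, rep, Equiv.apply_symm_apply]

noncomputable def rho (i : Fin n) : Fin n := rep A h (cls A h i)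

lemma cls_rho (i : Fin n) : cls A h (rho A h i) = cls A h i := cls_rep A h _

lemma rel_rho (i : Fin n) : rel A (rho A h i) i :=
  (cls_eq_iff A h).1 (cls_rho A h i)

lemma rho_eq_of_rel {i j : Fin n} (hr : rel A i j) : rho A h i = rho A h j := by
  unfold rho
  rw [(cls_eq_iff A h).2 hr]

lemma rho_rep (v : Fin (nm A h)) : rho A h (rep A h v) = rep A h v := by
  unfold rho
  rw [cls_rep]

noncomputable def dd (i : Fin n) : ℤ :=
  if rho A h i = i then 1 else if A (rho A h i) i = 2 then 1 else -1

lemma dd_pm (i : Fin n) : dd A h i = 1 ∨ dd A h i = -1 := by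
  unfold dd; split_ifs <;> simp

noncomputable def B (i j : Fin n) : ℤ := dd A h i * dd A h j * A i j

lemma B_symm (hAs : A.IsSymm) (i j : Fin n) : B A h j i = B A h i j := by
  unfold B
  rw [hAs.apply i j]
  ring

lemma B_sq (i j : Fin n) : (B A h i j)^2 = (A i j)^2 := by
  unfold B
  rcases dd_pm A h i with h1 | h1 <;> rcases dd_pm A h j with h2 | h2 <;>
    rw [h1, h2] <;> ring

lemma B_prod (i j k : Fin n) :
    B A h i j * B A h j k * B A h i k = A i j * A j k * A i k := by
  unfold B
  rcases dd_pm A h i with h1 | h1 <;> rcases dd_pm A h j with h2 | h2 <;>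
    rcases dd_pm A h k with h3 | h3 <;> rw [h1, h2, h3] <;> ring


lemma Ee_congr {x y z x' y' z' : ℤ} (hx : x^2 = x'^2) (hy : y^2 = y'^2) (hz : z^2 = z'^2)
    (hp : x*y*z = x'*y'*z') : Ee x y z = Ee x' y' z' := by
  unfold Ee
  have hx' : ((x:ℝ))^2 = ((x':ℝ))^2 := by exact_mod_cast congrArg (Int.cast : ℤ → ℝ) hx
  have hy' : ((y:ℝ))^2 = ((y':ℝ))^2 := by exact_mod_cast congrArg (Int.cast : ℤ → ℝ) hy
  have hz' : ((z:ℝ))^2 = ((z':ℝ))^2 := by exact_mod_cast congrArg (Int.cast : ℤ → ℝ) hz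
  have hp' : ((x:ℝ))*(y:ℝ)*(z:ℝ) = ((x':ℝ))*(y':ℝ)*(z':ℝ) := by
    exact_mod_cast congrArg (Int.cast : ℤ → ℝ) hp
  rw [hx', hy', hz', hp']

variable (hn : 3 ≤ n) (hAs : A.IsSymm) (hAh : ∀ i, A i i = 0)
  (h3 : ∀ f : Fin 3 → Fin n, Function.Injective f →
      ∀ μ ∈ spectrum ℝ ((A.submatrix f f).map (fun x : ℤ => (x : ℝ))),
        -Real.sqrt 5 < μ)

include hn hAs hAh h3 in
lemma pair_bound {i j : Fin n} (hij : i ≠ j) : (A i j)^2 ≤ 4 := by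
  obtain ⟨k, hki, hkj⟩ := exists_third hn i j
  exact boundOne _ _ _ (keyA A hAs hAh h3 hij (Ne.symm hkj) (Ne.symm hki))

include hAs hAh h3 in
lemma keyE {i j k : Fin n} (hij : i ≠ j) (hjk : j ≠ k) (hik : i ≠ k) :
    0 < Ee (A i j) (A j k) (A i k) :=
  EeOf _ _ _ (keyA A hAs hAh h3 hij hjk hik)

include hn hAs hAh h3 in
lemma B_bd {i j : Fin n} (hij : i ≠ j) : (B A h i j)^2 ≤ 4 := by
  rw [B_sq]
  exact pair_bound A hn hAs hAh h3 hij

include hAs hAh h3 in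
lemma keyEB {i j k : Fin n} (hij : i ≠ j) (hjk : j ≠ k) (hik : i ≠ k) :
    0 < Ee (B A h i j) (B A h j k) (B A h i k) := by
  rw [Ee_congr (B_sq A h i j) (B_sq A h j k) (B_sq A h i k) (B_prod A h i j k)]
  exact keyE A hAs hAh h3 hij hjk hik

include hn hAs hAh h3 in
lemma B_two {i j : Fin n} (hij : i ≠ j) (hr : rel A i j) : B A h i j = 2 := by
  have hsq : (A i j)^2 = 4 := hr.resolve_left hij
  have hrr : rho A h i = rho A h j := rho_eq_of_rel A h hr
  by_cases hri : rho A h i = i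
  · have hdi : dd A h i = 1 := by unfold dd; rw [if_pos hri]
    have hrj : rho A h j = i := by rw [← hrr]; exact hri
    have hrjj : ¬ (rho A h j = j) := by rw [hrj]; exact hij
    have hdj : dd A h j = if A i j = 2 then 1 else -1 := by
      unfold dd; rw [if_neg hrjj, hrj]
    unfold B
    rcases sq4 hsq with h2 | h2 <;> rw [hdi, hdj, h2] <;> norm_num
  · by_cases hrj : rho A h j = j
    · have hdj : dd A h j = 1 := by unfold dd; rw [if_pos hrj]
      have hri' : rho A h i = j := hrr.trans hrj
      have hdi : dd A h i = if A j i = 2 then 1 else -1 := by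
        unfold dd; rw [if_neg hri, hri']
      have haji : A j i = A i j := hAs.apply i j
      unfold B
      rcases sq4 hsq with h2 | h2 <;> rw [hdi, hdj, haji, h2] <;> norm_num
    · set r := rho A h i with hrdef
      have hrj' : rho A h j = r := hrr.symm
      have hri2 : r ≠ i := hri
      have hrj2 : r ≠ j := by
        intro hc
        exact hrj (hrj'.trans hc)
      have hsq_ri : (A r i)^2 = 4 := (rel_rho A h i).resolve_left hri2
      have hsq_rj : (A r j)^2 = 4 := by
        have h0 := rel_rho A h j
        rw [hrj'] at h0
        exact h0.resolve_left hrj2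
      have hrr' : rho A h r = r := by rw [hrdef]; exact rho_rep A h _
      have hdr : dd A h r = 1 := by unfold dd; rw [if_pos hrr']
      have hdi : dd A h i = if A r i = 2 then 1 else -1 := by
        unfold dd; rw [if_neg hri]
      have hdj : dd A h j = if A r j = 2 then 1 else -1 := by
        unfold dd; rw [if_neg hrj, hrj']
      have hBri : B A h r i = 2 := by
        unfold B; rcases sq4 hsq_ri with h2 | h2 <;> rw [hdr, hdi, h2] <;> norm_num
      have hBrj : B A h r j = 2 := by
        unfold B; rcases sq4 hsq_rj with h2 | h2 <;> rw [hdr, hdj, h2] <;> norm_num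
      have hE : 0 < Ee (B A h r i) (B A h r j) (B A h i j) := by
        rw [Ee_perm]
        exact keyEB A h hAs hAh h3 hri2 hij hrj2
      have hcl := (classify (B A h r i) (B A h r j) (B A h i j)
        (B_bd A h hn hAs hAh h3 hri2)
        (B_bd A h hn hAs hAh h3 hrj2)
        (B_bd A h hn hAs hAh h3 hij) hE).1
        (by rw [hBri]; norm_num) (by rw [hBrj]; norm_num)
      obtain ⟨-, hprod⟩ := hcl
      rw [hBri, hBrj] at hprod
      linarith

include hn hAs hAh h3 in
lemma B_const {i j k : Fin n} (hnik : ¬ rel A i k) (hr : rel A i j) :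
    B A h j k = B A h i k := by
  rcases eq_or_ne i j with rfl | hij
  · rfl
  have hik : i ≠ k := fun e => hnik (Or.inl e)
  have hjk : j ≠ k := by
    intro e
    exact hnik (h.trans hr (e ▸ h.refl j))
  have hBij : B A h i j = 2 := B_two A h hn hAs hAh h3 hij hr
  have hE : 0 < Ee (B A h i j) (B A h j k) (B A h i k) :=
    keyEB A h hAs hAh h3 hij hjk hik
  have hz : (B A h i k)^2 ≠ 4 := by
    rw [B_sq]
    intro hc
    exact hnik (Or.inr hc)
  exact (classify _ _ _ (B_bd A h hn hAs hAh h3 hij) (B_bd A h hn hAs hAh h3 hjk)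
    (B_bd A h hn hAs hAh h3 hik) hE).2 hBij hz

noncomputable def AFm : Matrix (Fin (nm A h)) (Fin (nm A h)) ℤ :=
  fun v w => if v = w then 0 else B A h (rep A h v) (rep A h w)

end Matrices

end Stmt11Aux

open Stmt11Aux in
theorem stmt11 {n : ℕ} (hn : 3 ≤ n) (A : Matrix (Fin n) (Fin n) ℤ)
    (hAs : A.IsSymm) (hAh : ∀ i, A i i = 0)
    (h3 : ∀ f : Fin 3 → Fin n, Function.Injective f →
      ∀ μ ∈ spectrum ℝ ((A.submatrix f f).map (fun x : ℤ => (x : ℝ))),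
        -Real.sqrt 5 < μ) :
    ∃ (m : ℕ) (AF : Matrix (Fin m) (Fin m) ℤ),
      AF.IsSymm ∧ (∀ v, AF v v = 0) ∧
      (∀ u v, AF u v = 0 ∨ AF u v = 1 ∨ AF u v = -1) ∧
      ∃ (a : Fin m → ℕ), (∀ v, 1 ≤ a v) ∧
        ∃ (e : Fin n ≃ (Σ v : Fin m, Fin (a v))) (d : Fin n → ℤ),
          (∀ i, d i = 1 ∨ d i = -1) ∧
          A = (Matrix.diagonal d)ᵀ * ((blowup AF a).submatrix e e) * Matrix.diagonal d := by
  have hequiv : Equivalence (rel A) := by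
    constructor
    · exact fun i => Or.inl rfl
    · intro i j hr
      rcases hr with rfl | hsq
      · exact Or.inl rfl
      · right
        rw [hAs.apply i j]
        exact hsq
    · intro i j k hij0 hjk0
      rcases hij0 with rfl | hsqij
      · exact hjk0
      rcases hjk0 with rfl | hsqjk
      · exact Or.inr hsqij
      rcases eq_or_ne i k with rfl | hik
      · exact Or.inl rfl
      have hij : i ≠ j := by rintro rfl; rw [hAh i] at hsqij; norm_num at hsqij
      have hjk : j ≠ k := by rintro rfl; rw [hAh j] at hsqjk; norm_num at hsqjk
      right
      exact ((classify (A i j) (A j k) (A i k)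
        (pair_bound A hn hAs hAh h3 hij) (pair_bound A hn hAs hAh h3 hjk)
        (pair_bound A hn hAs hAh h3 hik) (keyE A hAs hAh h3 hij hjk hik)).1 hsqij hsqjk).1
  set h := hequiv with hh
  refine ⟨nm A h, AFm A h, ?_, ?_, ?_, aF A h, fun v => aF_pos A h v, eqv A h, dd A h,
    dd_pm A h, ?_⟩
  · rw [Matrix.IsSymm]
    ext v w
    rw [Matrix.transpose_apply]
    unfold AFm
    rcases eq_or_ne v w with rfl | hvw
    · rfl
    · rw [if_neg hvw.symm, if_neg hvw]
      exact B_symm A h hAs _ _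
  · intro v; unfold AFm; rw [if_pos rfl]
  · intro u v
    rcases eq_or_ne u v with rfl | huv
    · left; unfold AFm; rw [if_pos rfl]
    · have hrep : rep A h u ≠ rep A h v := by
        intro hc
        apply huv
        rw [← cls_rep A h u, ← cls_rep A h v, hc]
      have hnr : ¬ rel A (rep A h u) (rep A h v) := by
        intro hr
        apply huv
        rw [← cls_rep A h u, ← cls_rep A h v]
        exact (cls_eq_iff A h).2 hr
      have hb : (B A h (rep A h u) (rep A h v))^2 ≤ 4 := B_bd A h hn hAs hAh h3 hrep
      have hb4 : (B A h (rep A h u) (rep A h v))^2 ≠ 4 := by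
        rw [B_sq]; intro hc; exact hnr (Or.inr hc)
      unfold AFm
      rw [if_neg huv]
      set b := B A h (rep A h u) (rep A h v) with hbdef
      have h1 : -2 ≤ b := by nlinarith
      have h2 : b ≤ 2 := by nlinarith
      interval_cases b <;> norm_num at hb4 <;> norm_num
  · have hblow : ∀ i j, blowup (AFm A h) (aF A h) (eqv A h i) (eqv A h j) = B A h i j := by
      intro i j
      unfold blowup
      rcases eq_or_ne i j with rfl | hij
      · rw [if_pos rfl]
        unfold B
        rw [hAh i]; ring
      · rw [if_neg (fun hc => hij ((eqv A h).injective hc))]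
        by_cases hc : cls A h i = cls A h j
        · rw [if_pos (by rw [eqv_fst, eqv_fst]; exact hc)]
          exact (B_two A h hn hAs hAh h3 hij ((cls_eq_iff A h).1 hc)).symm
        · rw [if_neg (by rw [eqv_fst, eqv_fst]; exact hc)]
          have hnij : ¬ rel A i j := fun hr => hc ((cls_eq_iff A h).2 hr)
          show AFm A h (eqv A h i).1 (eqv A h j).1 = _
          rw [eqv_fst, eqv_fst]
          unfold AFm
          rw [if_neg hc]
          show B A h (rho A h i) (rho A h j) = B A h i j
          have s1 : B A h (rho A h i) j = B A h i j :=
            B_const A h hn hAs hAh h3 hnij (h.symm (rel_rho A h i))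
          have hnjri : ¬ rel A j (rho A h i) := by
            intro hr
            apply hc
            have hcc := (cls_eq_iff A h).2 hr
            rw [cls_rho] at hcc
            exact hcc.symm
          have s2 : B A h (rho A h j) (rho A h i) = B A h j (rho A h i) :=
            B_const A h hn hAs hAh h3 hnjri (h.symm (rel_rho A h j))
          calc B A h (rho A h i) (rho A h j)
              = B A h (rho A h j) (rho A h i) := by rw [B_symm A h hAs]
            _ = B A h j (rho A h i) := s2
            _ = B A h (rho A h i) j := by rw [B_symm A h hAs]
            _ = B A h i j := s1
    rw [Matrix.diagonal_transpose]
    ext i j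
    rw [Matrix.mul_diagonal, Matrix.diagonal_mul, Matrix.submatrix_apply, hblow i j]
    unfold B
    rcases dd_pm A h i with h1 | h1 <;> rcases dd_pm A h j with h2 | h2 <;>
      rw [h1, h2] <;> ring
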